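/- Let A ⊆ ℕ^ℕ be open in the product topology on ℕ^ℕ (with ℕ discrete) and suppose player I does not have a winning strategy in the Gale–Stewart game with payoff set A. Then there exists a strategy τ for player II such that for every finite position s of even length produced by a play according to τ, player I does not have a winning strategy in the Gale–Stewart game with payoff set A/s; moreover, any such strategy τ is a winning strategy for player II in the game with payoff set A. -/

import Mathlib

/-- The finite position given by the first `n` moves of the infinite play `x`. -/
def position (x : ℕ → ℕ) (n : ℕ) : List ℕ := List.ofFn fun i : Fin n => x i.val

/-- `x` is an infinite play in which player I (moving at even indices) follows
the strategy `σ`, i.e. each even-indexed move is the one `σ` assigns to the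
current finite position. Player II's moves are arbitrary. -/
def FollowsI (σ : List ℕ → ℕ) (x : ℕ → ℕ) : Prop :=
  ∀ n : ℕ, Even n → x n = σ (position x n)

/-- `x` is an infinite play in which player II (moving at odd indices) follows
the strategy `τ`. Player I's moves are arbitrary. -/
def FollowsII (τ : List ℕ → ℕ) (x : ℕ → ℕ) : Prop :=
  ∀ n : ℕ, Odd n → x n = τ (position x n)

/-- `σ` is a winning strategy for player I in the Gale–Stewart game with payoff
set `A`: every play in which I follows `σ` lands in `A`. -/
def WinningStratI (A : Set (ℕ → ℕ)) (σ : List ℕ → ℕ) : Prop :=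
  ∀ x : ℕ → ℕ, FollowsI σ x → x ∈ A

/-- `τ` is a winning strategy for player II in the Gale–Stewart game with payoff
set `A`: every play in which II follows `τ` avoids `A`. -/
def WinningStratII (A : Set (ℕ → ℕ)) (τ : List ℕ → ℕ) : Prop :=
  ∀ x : ℕ → ℕ, FollowsII τ x → x ∉ A

/-- The Gale–Stewart game with payoff set `A` is determined: one of the two
players has a winning strategy. -/
def Determined (A : Set (ℕ → ℕ)) : Prop :=
  (∃ σ, WinningStratI A σ) ∨ (∃ τ, WinningStratII A τ)

/-- The concatenation `s⌢x` of a finite sequence `s` with an infinite sequence `x`. -/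
def cat (s : List ℕ) (x : ℕ → ℕ) : ℕ → ℕ :=
  fun n => if h : n < s.length then s.get ⟨n, h⟩ else x (n - s.length)

/-- The shifted set `B/s = { x : s⌢x ∈ B }`. -/
def shift (B : Set (ℕ → ℕ)) (s : List ℕ) : Set (ℕ → ℕ) := {x | cat s x ∈ B}

/-- `s` is a finite position produced by a (partial) play in which player II
follows the strategy `τ`: at every odd index below `s.length`, the move recorded
in `s` is the one `τ` assigns to the preceding position. -/
def ConsistentPosII (τ : List ℕ → ℕ) (s : List ℕ) : Prop :=
  ∀ k (h : k < s.length), Odd k → s.get ⟨k, h⟩ = τ (s.take k)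

lemma position_length (x : ℕ → ℕ) (n : ℕ) : (position x n).length = n := by
  simp [position]

lemma position_getElem (x : ℕ → ℕ) (n k : ℕ) (h : k < (position x n).length) :
    (position x n)[k] = x k := by
  simp [position] at h ⊢

lemma position_take (x : ℕ → ℕ) (n k : ℕ) (h : k ≤ n) :
    (position x n).take k = position x k := by
  apply List.ext_getElem
  · simp [position_length]; omega
  · intro i h1 h2
    rw [List.getElem_take, position_getElem, position_getElem]

lemma drop2_position (x : ℕ → ℕ) (n : ℕ) :
    (position x (n+2)).drop 2 = position (fun k => x (k+2)) n := by
  apply List.ext_getElem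
  · simp [position_length]
  · intro i h1 h2
    rw [List.getElem_drop, position_getElem, position_getElem]
    ring_nf

lemma cat_nil (x : ℕ → ℕ) : cat [] x = x := by
  funext n; simp [cat]

lemma cat_append2 (s : List ℕ) (a b : ℕ) (x : ℕ → ℕ) (h0 : x 0 = a) (h1 : x 1 = b) :
    cat s x = cat (s ++ [a, b]) (fun k => x (k + 2)) := by
  funext n
  simp only [cat, List.length_append, List.length_cons, List.length_nil, List.get_eq_getElem]
  rcases lt_trichotomy n s.length with hn | hn | hn
  · rw [dif_pos hn, dif_pos (by omega)]
    rw [List.getElem_append_left hn]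
  · subst hn
    rw [dif_neg (by omega), dif_pos (by omega)]
    rw [List.getElem_append_right (by omega)]
    simp [h0]
  · rw [dif_neg (by omega)]
    by_cases h2 : n < s.length + 2
    · rw [dif_pos (by omega)]
      have : n = s.length + 1 := by omega
      subst this
      rw [List.getElem_append_right (by omega)]
      simp [h1]
    · rw [dif_neg (by omega)]
      congr 1
      omega

lemma step (A : Set (ℕ → ℕ)) (s : List ℕ)
    (hs : ¬ ∃ σ, WinningStratI (shift A s) σ) (a : ℕ) :
    ∃ b, ¬ ∃ σ, WinningStratI (shift A (s ++ [a, b])) σ := by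
  by_contra hb
  push_neg at hb
  choose σf hσf using hb
  apply hs
  refine ⟨fun p => if p.length = 0 then a else σf (p.getD 1 0) (p.drop 2), ?_⟩
  intro x hx
  have hx0 : x 0 = a := by
    have := hx 0 (by decide)
    simpa [position] using this
  set b := x 1 with hb1
  set y : ℕ → ℕ := fun k => x (k + 2) with hy
  have hyf : FollowsI (σf b) y := by
    intro n hn
    have h2 : Even (n + 2) := by
      rcases hn with ⟨m, hm⟩; exact ⟨m + 1, by omega⟩
    show x (n + 2) = _
    rw [hx (n + 2) h2]
    simp only []
    have hlen : (position x (n+2)).length = n + 2 := position_length x (n+2)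
    rw [if_neg (by omega)]
    have hget : (position x (n+2)).getD 1 0 = b := by
      rw [List.getD_eq_getElem _ _ (by omega)]
      rw [position_getElem]
    rw [hget, drop2_position]
  have := hσf b y hyf
  have hcat : cat s x = cat (s ++ [a, b]) y := cat_append2 s a b x hx0 rfl
  simpa [shift, hcat] using this

/-- If `A` is open and player I has no winning strategy in the game with payoff `A`,
then there is a strategy `τ` for player II such that I has no winning strategy in
the game with payoff `A/s` for any even-length position `s` arising from a play
according to `τ`; moreover, any such `τ` is a winning strategy for player II. -/
theorem exists_good_stratII (A : Set (ℕ → ℕ)) (hA : IsOpen A)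
    (h : ¬ ∃ σ, WinningStratI A σ) :
    (∃ τ : List ℕ → ℕ, ∀ s : List ℕ, Even s.length → ConsistentPosII τ s →
        ¬ ∃ σ, WinningStratI (shift A s) σ) ∧
    (∀ τ : List ℕ → ℕ, (∀ s : List ℕ, Even s.length → ConsistentPosII τ s →
        ¬ ∃ σ, WinningStratI (shift A s) σ) → WinningStratII A τ) := by
  classical
  have shift_nil : shift A [] = A := by
    ext x; simp [shift, cat_nil]
  constructor
  · -- existence
    set τ : List ℕ → ℕ := fun p =>
      if hp : ∃ b, ¬ ∃ σ, WinningStratI (shift A (p ++ [b])) σ then hp.choose else 0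
      with hτ
    refine ⟨τ, ?_⟩
    have key : ∀ n : ℕ, ∀ s : List ℕ, s.length = n → Even n → ConsistentPosII τ s →
        ¬ ∃ σ, WinningStratI (shift A s) σ := by
      intro n
      induction n using Nat.strong_induction_on with
      | _ n ih =>
        intro s hlen heven hcons
        rcases n with _ | _ | m
        · have : s = [] := List.length_eq_zero_iff.mp hlen
          rw [this, shift_nil]; exact h
        · exact absurd heven (by decide)
        · 
          have hm : Even m := by rcases heven with ⟨k, hk⟩; exact ⟨k-1, by omega⟩
          set t := s.take m with ht
          have htlen : t.length = m := by simp [ht, hlen]; omega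
          have htcons : ConsistentPosII τ t := by
            intro k hk hodd
            have hk' : k < s.length := by rw [hlen]; omega
            have h1 : t.get ⟨k, hk⟩ = s.get ⟨k, hk'⟩ := by
              simp only [List.get_eq_getElem, ht]
              rw [List.getElem_take]
            rw [h1, hcons k hk' hodd, ht, List.take_take]
            have hmin : min k m = k := by omega
            rw [hmin]
          have hIH := ih m (by omega) t htlen hm htcons
          set a := s[m]'(by omega) with ha
          have hstep := step A t hIH a
          have hτval : ∃ b, ¬ ∃ σ, WinningStratI (shift A ((t ++ [a]) ++ [b])) σ := by
            obtain ⟨b, hb⟩ := hstep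
            exact ⟨b, by simpa using hb⟩
          set b := τ (t ++ [a]) with hbdef
          have hbgood : ¬ ∃ σ, WinningStratI (shift A ((t ++ [a]) ++ [b])) σ := by
            rw [hbdef, hτ]
            simp only [dif_pos hτval]
            exact hτval.choose_spec
          -- s = t ++ [a, b]
          have hsb : s[m+1]'(by omega) = b := by
            have := hcons (m+1) (by omega) (hm.add_one)
            simp only [List.get_eq_getElem] at this
            rw [this]
            congr 1
            -- s.take (m+1) = t ++ [a]
            apply List.ext_getElem
            · simp [htlen, hlen]
              try omega
            · intro i h1 h2
              rw [List.getElem_take]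
              rcases Nat.lt_or_ge i m with hi | hi
              · rw [List.getElem_append_left (by omega)]
                simp only [ht]
                rw [List.getElem_take]
              · have : i = m := by simp [htlen] at h2; omega
                subst this
                rw [List.getElem_append_right (by omega)]
                simp [htlen, ha]
          have hseq : s = (t ++ [a]) ++ [b] := by
            apply List.ext_getElem
            · simp [htlen, hlen]
            · intro i h1 h2
              rcases Nat.lt_or_ge i m with hi | hi
              · rw [List.getElem_append_left (by simp [htlen]; omega),
                    List.getElem_append_left (by simp [htlen]; omega)]
                simp only [ht]
                rw [List.getElem_take]
              · rcases Nat.lt_or_ge i (m+1) with hi2 | hi2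
                · have : i = m := by omega
                  subst this
                  rw [List.getElem_append_left (by simp [htlen])]
                  rw [List.getElem_append_right (by omega)]
                  simp [htlen, ha]
                · have : i = m + 1 := by omega
                  subst this
                  rw [List.getElem_append_right (by simp [htlen])]
                  simp [htlen, ← hsb]
          rw [hseq]
          exact hbgood
    intro s heven hcons
    exact key s.length s rfl heven hcons
  · -- any such τ is winning for II
    intro τ hτ x hx hxA
    obtain ⟨I, u, hu, hsub⟩ := isOpen_pi_iff.mp hA x hxA
    set n := 2 * (I.sup id + 1) with hn
    set s := position x n with hs
    have hslen : s.length = n := position_length x n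
    have hcons : ConsistentPosII τ s := by
      intro k hk hodd
      have hk' : k < n := by rwa [hslen] at hk
      have h1 : s.get ⟨k, hk⟩ = x k := by
        simp only [List.get_eq_getElem, hs]
        rw [position_getElem]
      rw [h1, hx k hodd, hs, position_take x n k (le_of_lt hk')]
    have hwin : ∃ σ, WinningStratI (shift A s) σ := by
      refine ⟨fun _ => 0, fun z _ => ?_⟩
      apply hsub
      intro i hi
      have hi' : i < n := by
        have : i ≤ I.sup id := Finset.le_sup (f := id) hi
        omega
      have : cat s z i = x i := by
        simp only [cat, hslen, dif_pos hi', List.get_eq_getElem, hs]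
        rw [dif_pos (by rw [position_length]; exact hi')]
        rw [position_getElem]
      rw [this]
      exact (hu i hi).2
    exact hτ s (by rw [hslen]; exact ⟨I.sup id + 1, by omega⟩) hcons hwin
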